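/- Generalized Lagrange inversion over roots: let Q(t) be a formal power series with invertible constant term, N ≥ 1, and let g_1,...,g_N be the N branches of the solution to g^N = x·Q(g) (i.e. g_k(x) = g(ω_N^k x^{1/N}) for a fixed Puiseux solution g). Then for any formal power series φ with φ(0)=0: Σ_{k=1}^N φ(g_k(x)) = Σ_{n>0} (1/n) [t^{nN-1}](φ'(t)Q(t)^n) x^n. -/

import Mathlib

open PowerSeries

/-- Composition of formal power series (substitution of `g`, with `g(0)=0`, into `f`). -/
noncomputable def pcomp {R : Type*} [CommRing R] (f g : PowerSeries R) : PowerSeries R :=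
  PowerSeries.mk fun n => ∑ k ∈ Finset.range (n + 1),
    PowerSeries.coeff k f * PowerSeries.coeff n (g ^ k)

/-- `ω_N^k = e^{2πik/N}`, the `N`-th roots of unity. -/
noncomputable def rootOfUnity (N k : ℕ) : ℂ :=
  Complex.exp (2 * Real.pi * Complex.I * k / N)

open Finset

namespace Lag
variable (f g : PowerSeries ℂ)

theorem coeff_pcomp (n : ℕ) : coeff n (pcomp f g) =
    ∑ k ∈ range (n + 1), coeff k f * coeff n (g ^ k) := by
  simp [pcomp]

theorem coeff_pow_zero {g : PowerSeries ℂ} (hg0 : constantCoeff g = 0) {n k : ℕ} (h : n < k) :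
    coeff n (g ^ k) = 0 := by
  have : (X : PowerSeries ℂ)^k ∣ g^k := pow_dvd_pow_of_dvd (X_dvd_iff.2 hg0) k
  exact X_pow_dvd_iff.1 this n h

theorem sum_coeff_pow_eq {g : PowerSeries ℂ} (hg0 : constantCoeff g = 0) (c : ℕ → ℂ)
    {n B : ℕ} (h : n + 1 ≤ B) :
    ∑ i ∈ range B, c i * coeff n (g ^ i) = ∑ i ∈ range (n + 1), c i * coeff n (g ^ i) := by
  refine (Finset.sum_subset (Finset.range_subset_range.2 h) fun i _ hi => ?_).symm
  rw [coeff_pow_zero hg0 (by simpa using hi), mul_zero]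

theorem coeff_eval₂ {g : PowerSeries ℂ} (hg0 : constantCoeff g = 0) (p : Polynomial ℂ) (n : ℕ) :
    coeff n (Polynomial.eval₂ (C (R := ℂ)) g p) = ∑ i ∈ range (n + 1), p.coeff i * coeff n (g ^ i) := by
  rw [Polynomial.eval₂_eq_sum_range' (C (R := ℂ))
    (Nat.lt_succ_of_le (Nat.le_max_left p.natDegree n)) g, map_sum]
  rw [Finset.sum_congr rfl fun i _ => by rw [coeff_C_mul]]
  exact sum_coeff_pow_eq hg0 _ (Nat.succ_le_succ (Nat.le_max_right _ _))

theorem coeff_pcomp_eval₂ {g : PowerSeries ℂ} (hg0 : constantCoeff g = 0) (f : PowerSeries ℂ)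
    {n M : ℕ} (h : n < M) :
    coeff n (pcomp f g) = coeff n (Polynomial.eval₂ (C (R := ℂ)) g (trunc M f)) := by
  rw [coeff_pcomp, coeff_eval₂ hg0]
  refine Finset.sum_congr rfl fun i hi => ?_
  rw [PowerSeries.coeff_trunc, if_pos (lt_of_lt_of_le (Finset.mem_range.1 hi) h)]

theorem pcomp_mul {g : PowerSeries ℂ} (hg0 : constantCoeff g = 0) (a b : PowerSeries ℂ) :
    pcomp (a * b) g = pcomp a g * pcomp b g := by
  ext n
  set M := n + 1 with hM
  have hn : n < M := Nat.lt_succ_self n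
  rw [coeff_pcomp_eval₂ hg0 _ hn, PowerSeries.coeff_mul]
  have hfac : ∀ p : ℕ × ℕ, p ∈ Finset.HasAntidiagonal.antidiagonal n →
      coeff p.1 (pcomp a g) * coeff p.2 (pcomp b g) =
      coeff p.1 (Polynomial.eval₂ (C (R := ℂ)) g (trunc M a)) *
      coeff p.2 (Polynomial.eval₂ (C (R := ℂ)) g (trunc M b)) := by
    intro p hp
    have h1 : p.1 < M := Nat.lt_succ_of_le (Finset.HasAntidiagonal.antidiagonal.fst_le hp)
    have h2 : p.2 < M := Nat.lt_succ_of_le (Finset.HasAntidiagonal.antidiagonal.snd_le hp)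
    rw [coeff_pcomp_eval₂ hg0 a h1, coeff_pcomp_eval₂ hg0 b h2]
  rw [Finset.sum_congr rfl hfac, ← PowerSeries.coeff_mul, ← Polynomial.eval₂_mul]
  -- now compare eval₂ of (trunc M (a*b)) with eval₂ of (trunc M a * trunc M b)
  rw [coeff_eval₂ hg0, coeff_eval₂ hg0]
  refine Finset.sum_congr rfl fun i hi => ?_
  have hiM : i < M := Finset.mem_range.1 hi
  congr 1
  rw [PowerSeries.coeff_trunc, if_pos hiM, Polynomial.coeff_mul, PowerSeries.coeff_mul]
  refine Finset.sum_congr rfl fun p hp => ?_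
  have h1 : p.1 < M := lt_of_le_of_lt (Finset.HasAntidiagonal.antidiagonal.fst_le hp) hiM
  have h2 : p.2 < M := lt_of_le_of_lt (Finset.HasAntidiagonal.antidiagonal.snd_le hp) hiM
  rw [PowerSeries.coeff_trunc, if_pos h1, PowerSeries.coeff_trunc, if_pos h2]

theorem pcomp_one {g : PowerSeries ℂ} : pcomp 1 g = 1 := by
  ext n
  rw [coeff_pcomp]
  rcases Nat.eq_zero_or_pos n with h | h
  · subst h; simp
  · rw [Finset.sum_eq_single 0]
    · simp [PowerSeries.coeff_one, Nat.pos_iff_ne_zero.1 h]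
    · intro k _ hk
      rw [PowerSeries.coeff_one, if_neg hk, zero_mul]
    · simp

theorem constantCoeff_pcomp {g : PowerSeries ℂ} (f : PowerSeries ℂ) :
    constantCoeff (pcomp f g) = constantCoeff f := by
  rw [← coeff_zero_eq_constantCoeff, coeff_pcomp]
  simp

theorem pcomp_C {g : PowerSeries ℂ} (r : ℂ) : pcomp (C r) g = C r := by
  ext n
  rw [coeff_pcomp, Finset.sum_eq_single 0]
  · simp [PowerSeries.coeff_C, coeff_zero_eq_constantCoeff]
  · intro k _ hk
    rw [PowerSeries.coeff_C, if_neg hk, zero_mul]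
  · simp

theorem pcomp_pow {g : PowerSeries ℂ} (hg0 : constantCoeff g = 0) (a : PowerSeries ℂ) (k : ℕ) :
    pcomp (a ^ k) g = (pcomp a g) ^ k := by
  induction k with
  | zero => simpa using pcomp_one
  | succ k ih => rw [pow_succ, pow_succ, pcomp_mul hg0, ih]

theorem pcomp_C_mul {g : PowerSeries ℂ} (hg0 : constantCoeff g = 0) (r : ℂ) (a : PowerSeries ℂ) :
    pcomp (C r * a) g = C r * pcomp a g := by
  rw [pcomp_mul hg0, pcomp_C]

/-- `(a+b)^N = a^N + N a^(N-1) b + b^2 r`. -/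
theorem exists_binom {R : Type*} [CommRing R] (a b : R) (N : ℕ) :
    ∃ r : R, (a + b) ^ (N + 1) = a ^ (N + 1) + (N + 1) * a ^ N * b + b ^ 2 * r := by
  induction N with
  | zero => exact ⟨0, by ring⟩
  | succ N ih =>
    obtain ⟨r, hr⟩ := ih
    refine ⟨a * r + a ^ N + N * a ^ N + b * r, ?_⟩
    rw [pow_succ, hr]
    push_cast
    ring

/-- If the low coefficients of `d` vanish then `coeff n (A*d) = A₀ dₙ`. -/
theorem coeff_mul_highorder (A d : PowerSeries ℂ) (n : ℕ)
    (hd : ∀ i < n, coeff i d = 0) :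
    coeff n (A * d) = constantCoeff A * coeff n d := by
  rw [PowerSeries.coeff_mul, Finset.sum_eq_single (0, n)]
  · rw [coeff_zero_eq_constantCoeff]
  · intro p hp hne
    have hsum := Finset.HasAntidiagonal.mem_antidiagonal.1 hp
    have : p.2 < n := by
      rcases Nat.eq_zero_or_pos p.1 with h | h
      · exfalso; apply hne
        have : p.2 = n := by omega
        rw [← h, ← this]
      · omega
    rw [hd p.2 this, mul_zero]
  · intro h
    exfalso; exact h (Finset.HasAntidiagonal.mem_antidiagonal.2 (by simp))

/-- Uniqueness of `N`-th roots with matching invertible constant term. -/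
theorem pow_eq_pow_unique {a b : PowerSeries ℂ} {N : ℕ} (hN : 1 ≤ N)
    (hpow : a ^ N = b ^ N) (hc : constantCoeff a = constantCoeff b)
    (hb : constantCoeff b ≠ 0) : a = b := by
  obtain ⟨M, rfl⟩ := Nat.exists_eq_add_of_le hN
  rw [add_comm 1 M] at hpow
  have key : ∀ n, ∀ j ≤ n, coeff j (a - b) = 0 := by
    intro n
    induction n with
    | zero =>
      intro j hj
      interval_cases j
      simpa [coeff_zero_eq_constantCoeff, sub_eq_zero] using hc
    | succ n ih =>
      intro j hj
      rcases eq_or_lt_of_le hj with rfl | h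
      · -- j = n+1
        set d := a - b with hd
        have ha : a = b + d := by ring
        obtain ⟨r, hr⟩ := exists_binom b d M
        rw [ha, hr] at hpow
        have h0 : (0 : PowerSeries ℂ) = ((M : PowerSeries ℂ) + 1) * b ^ M * d + d ^ 2 * r := by
          rw [add_assoc] at hpow
          exact (add_eq_left.1 hpow).symm
        have hdlow : ∀ i < n + 1, coeff i d = 0 := fun i hi => ih i (Nat.lt_succ_iff.1 hi)
        have hXd : (X : PowerSeries ℂ) ^ (n+1) ∣ d := X_pow_dvd_iff.2 hdlow
        have hXd2 : (X : PowerSeries ℂ) ^ (n+2) ∣ d ^ 2 * r := by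
          have h2 : ((X : PowerSeries ℂ) ^ (n+1)) ^ 2 ∣ d ^ 2 := pow_dvd_pow_of_dvd hXd 2
          rw [← pow_mul] at h2
          exact dvd_mul_of_dvd_left (dvd_trans (pow_dvd_pow _ (by omega)) h2) r
        have hc2 : coeff (n+1) (d ^ 2 * r) = 0 := X_pow_dvd_iff.1 hXd2 _ (Nat.lt_succ_self _)
        have hmul : coeff (n+1) (((M : PowerSeries ℂ) + 1) * b ^ M * d) =
            ((M : ℂ) + 1) * (constantCoeff b) ^ M * coeff (n+1) d := by
          rw [coeff_mul_highorder _ _ _ hdlow]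
          congr 1
          simp [map_mul, map_pow]
        have hcoeff := congrArg (coeff (n+1)) h0
        rw [map_zero, map_add, hc2, add_zero, hmul] at hcoeff
        have hne : ((M : ℂ) + 1) * (constantCoeff b) ^ M ≠ 0 :=
          mul_ne_zero (Nat.cast_add_one_ne_zero M) (pow_ne_zero _ hb)
        have := (mul_eq_zero.1 hcoeff.symm).resolve_left hne
        exact this
      · exact ih j (Nat.lt_succ_iff.1 h)
  ext j
  have := key j j le_rfl
  rw [map_sub, sub_eq_zero] at this
  simpa using this

/-- Existence of `N`-th roots of power series with non-vanishing constant term over `ℂ`. -/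
theorem exists_nth_root (Q : PowerSeries ℂ) (hQ : constantCoeff Q ≠ 0) {N : ℕ} (hN : 1 ≤ N) :
    ∃ S : PowerSeries ℂ, S ^ N = Q ∧ constantCoeff S ≠ 0 := by
  obtain ⟨c, hc⟩ := IsAlgClosed.exists_pow_nat_eq (constantCoeff Q) (Nat.lt_of_lt_of_le one_pos hN)
  have hc0 : c ≠ 0 := by
    intro h; apply hQ; rw [← hc, h, zero_pow (by omega)]
  have hlead : (N : ℂ) * c ^ (N - 1) ≠ 0 :=
    mul_ne_zero (Nat.cast_ne_zero.2 (by omega)) (pow_ne_zero _ hc0)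
  set F : ℕ → PowerSeries ℂ := fun n => Nat.rec (C c)
    (fun n h => h + C ((coeff (n+1) Q - coeff (n+1) (h ^ N)) * ((N : ℂ) * c ^ (N-1))⁻¹)
      * X ^ (n+1)) n with hF
  have hFsucc : ∀ n, F (n+1) = F n +
      C ((coeff (n+1) Q - coeff (n+1) (F n ^ N)) * ((N : ℂ) * c ^ (N-1))⁻¹) * X ^ (n+1) :=
    fun n => rfl
  have h1 : ∀ n, constantCoeff (F n) = c := by
    intro n
    induction n with
    | zero => simp [hF]
    | succ n ih =>
      rw [hFsucc, map_add, ih]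
      simp
  have hstep : ∀ n j, j ≤ n → coeff j (F (n+1)) = coeff j (F n) := by
    intro n j hj
    rw [hFsucc, map_add, coeff_C_mul, coeff_X_pow, if_neg (by omega), mul_zero, add_zero]
  have hstab : ∀ j n, j ≤ n → coeff j (F n) = coeff j (F j) := by
    intro j n
    induction n with
    | zero => intro hj; interval_cases j; rfl
    | succ n ih =>
      intro hj
      rcases Nat.lt_succ_iff_lt_or_eq.1 (Nat.lt_succ_of_le hj) with h | rfl
      · rw [hstep n j (by omega)]; exact ih (by omega)
      · rfl
  have h2 : ∀ n j, j ≤ n → coeff j (F n ^ N) = coeff j Q := by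
    intro n
    induction n with
    | zero =>
      intro j hj; interval_cases j
      have : (F 0 : PowerSeries ℂ) = C c := rfl
      rw [this, ← map_pow, hc]
      simp [coeff_zero_eq_constantCoeff]
    | succ n ih =>
      intro j hj
      set ε := (coeff (n+1) Q - coeff (n+1) (F n ^ N)) * ((N : ℂ) * c ^ (N-1))⁻¹ with hε
      obtain ⟨r, hr⟩ := exists_binom (F n) (C ε * X ^ (n+1)) (N - 1)
      rw [Nat.sub_add_cancel hN] at hr
      have hd2 : ∀ i ≤ n + 1, coeff i ((C ε * X ^ (n+1)) ^ 2 * r) = 0 := by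
        intro i hi
        have hdvd : (X : PowerSeries ℂ) ^ (2*(n+1)) ∣ (C ε * X ^ (n+1)) ^ 2 * r := by
          refine dvd_mul_of_dvd_left ?_ r
          exact ⟨C ε * C ε, by ring⟩
        exact X_pow_dvd_iff.1 hdvd i (by omega)
      have hkey := congrArg (coeff j) hr
      rw [hFsucc n]
      rcases Nat.lt_succ_iff_lt_or_eq.1 (Nat.lt_succ_of_le hj) with h | rfl
      · -- j ≤ n
        rw [hkey, map_add, map_add, hd2 j hj, add_zero]
        have hmid : coeff j ((↑(N-1) + 1 : PowerSeries ℂ) * F n ^ (N-1) * (C ε * X ^ (n+1)))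
            = 0 := by
          have hdvd : (X : PowerSeries ℂ) ^ (n+1) ∣
              (↑(N-1) + 1 : PowerSeries ℂ) * F n ^ (N-1) * (C ε * X ^ (n+1)) :=
            ⟨(↑(N-1) + 1 : PowerSeries ℂ) * F n ^ (N-1) * C ε, by ring⟩
          exact X_pow_dvd_iff.1 hdvd j (by omega)
        rw [hmid, add_zero]
        exact ih j (by omega)
      · -- j = n+1
        rw [hkey, map_add, map_add, hd2 _ le_rfl, add_zero]
        have hmid : coeff (n+1)
            ((↑(N-1) + 1 : PowerSeries ℂ) * F n ^ (N-1) * (C ε * X ^ (n+1)))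
            = (N : ℂ) * c ^ (N-1) * ε := by
          have harr : (↑(N-1) + 1 : PowerSeries ℂ) * F n ^ (N-1) * (C ε * X ^ (n+1))
              = ((↑(N-1) + 1 : PowerSeries ℂ) * F n ^ (N-1) * C ε) * X ^ (n+1) := by ring
          rw [harr]
          have := PowerSeries.coeff_mul_X_pow
            ((↑(N-1) + 1 : PowerSeries ℂ) * F n ^ (N-1) * C ε) (n+1) 0
          rw [zero_add] at this
          rw [this, coeff_zero_eq_constantCoeff, map_mul, map_mul, map_pow, h1 n,
            constantCoeff_C]
          congr 2
          have : ((N - 1 : ℕ) : PowerSeries ℂ) + 1 = ((N : ℕ) : PowerSeries ℂ) := by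
            have := Nat.sub_add_cancel hN
            exact_mod_cast congrArg (Nat.cast : ℕ → PowerSeries ℂ) this
          rw [this]
          simp
        rw [hmid, hε, mul_comm ((N:ℂ) * c ^ (N-1)), inv_mul_cancel_right₀ hlead]
        ring
  refine ⟨PowerSeries.mk (fun j => coeff j (F j)), ?_, ?_⟩
  · ext j
    have hdiff : (X : PowerSeries ℂ) ^ (j+1) ∣ (PowerSeries.mk (fun i => coeff i (F i)) - F j) := by
      refine X_pow_dvd_iff.2 fun i hi => ?_
      rw [map_sub, coeff_mk, hstab i j (by omega), sub_eq_zero]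
    have hdvd : (X : PowerSeries ℂ) ^ (j+1) ∣
        (PowerSeries.mk (fun i => coeff i (F i)))^N - F j ^ N :=
      dvd_trans hdiff (sub_dvd_pow_sub_pow _ _ N)
    have := X_pow_dvd_iff.1 hdvd j (Nat.lt_succ_self j)
    rw [map_sub, sub_eq_zero] at this
    rw [this, h2 j j le_rfl]
  · rw [← coeff_zero_eq_constantCoeff, coeff_mk]
    have : coeff 0 (F 0) = c := by simp [hF]
    rw [this]; exact hc0

theorem exists_root_eq {N : ℕ} (hN : 1 ≤ N) (Q g : PowerSeries ℂ)
    (hQ : constantCoeff Q ≠ 0) (hg0 : constantCoeff g = 0)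
    (hg : g ^ N = X ^ N * pcomp Q g) :
    ∃ S : PowerSeries ℂ, S ^ N = Q ∧ constantCoeff S ≠ 0 ∧ g = X * pcomp S g := by
  obtain ⟨S₀, hS₀, hS₀0⟩ := exists_nth_root Q hQ hN
  set U := pcomp S₀ g with hU
  have hU0 : constantCoeff U ≠ 0 := by rw [hU, constantCoeff_pcomp]; exact hS₀0
  have hUunit : IsUnit U := by
    rw [PowerSeries.isUnit_iff_constantCoeff]
    exact Ne.isUnit hU0
  obtain ⟨u, hu⟩ := hUunit
  obtain ⟨A, hA⟩ := X_dvd_iff.2 hg0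
  have hBN : A ^ N = U ^ N := by
    have h1 : (X : PowerSeries ℂ) ^ N * A ^ N = X ^ N * U ^ N := by
      rw [← mul_pow, ← hA, hg, hU, ← pcomp_pow hg0, hS₀]
    exact mul_left_cancel₀ (pow_ne_zero _ X_ne_zero) h1
  set V := A * ↑u⁻¹ with hV
  have hVN : V ^ N = 1 := by
    rw [hV, mul_pow, hBN, ← hu, ← mul_pow]
    simp
  set v := constantCoeff V with hv
  have hvN : v ^ N = 1 := by rw [hv, ← map_pow, hVN, map_one]
  have hv0 : v ≠ 0 := by
    intro h; rw [h, zero_pow (by omega)] at hvN; exact zero_ne_one hvN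
  have hVC : V = C v := by
    refine pow_eq_pow_unique hN ?_ ?_ ?_
    · rw [hVN, ← map_pow, hvN, map_one]
    · rw [constantCoeff_C]
    · rw [constantCoeff_C]; exact hv0
  have hAU : A = C v * U := by
    have : V * ↑u = A := by
      rw [hV, mul_assoc]
      simp
    rw [← this, hVC, hu]
  refine ⟨C v * S₀, ?_, ?_, ?_⟩
  · rw [mul_pow, ← map_pow, hvN, map_one, one_mul, hS₀]
  · rw [map_mul, constantCoeff_C]
    exact mul_ne_zero hv0 hS₀0
  · rw [pcomp_C_mul hg0]
    conv_lhs => rw [hA, hAU]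

theorem derivativeFun_pow (S : PowerSeries ℂ) (k : ℕ) :
    derivativeFun (S ^ k) = (k : ℕ) • (S ^ (k - 1) * derivativeFun S) := by
  have h := Derivation.leibniz_pow (PowerSeries.derivative (R := ℂ)) S k
  rw [smul_eq_mul] at h
  exact h

theorem coeff_derivFun (f : PowerSeries ℂ) (n : ℕ) :
    coeff n (derivativeFun f) = coeff (n + 1) f * (n + 1) := coeff_derivative f n

theorem core_lagrange {S g : PowerSeries ℂ} (hg0 : constantCoeff g = 0)
    (heq : g = X * pcomp S g) :
    ∀ m : ℕ, ∀ j : ℕ, 1 ≤ j → j ≤ m →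
      (m : ℂ) * coeff m (g ^ j) = (j : ℂ) * coeff (m - j) (S ^ m) := by
  have hpow : ∀ j : ℕ, g ^ j = X ^ j * pcomp (S ^ j) g := by
    intro j
    rw [pcomp_pow hg0]
    conv_lhs => rw [heq]
    rw [mul_pow]
  have hcoe : ∀ j m : ℕ, j ≤ m → coeff m (g ^ j) = coeff (m - j) (pcomp (S ^ j) g) := by
    intro j m hjm
    conv_lhs => rw [hpow j]
    have h : m - j + j = m := Nat.sub_add_cancel hjm
    rw [← h, PowerSeries.coeff_X_pow_mul]
    simp
  intro m
  induction m using Nat.strong_induction_on with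
  | _ m IH =>
    intro j hj1 hjm
    rcases eq_or_lt_of_le hjm with rfl | hlt
    · -- j = m
      rw [hcoe j j le_rfl, Nat.sub_self]
      congr 1
      rw [coeff_pcomp]
      simp [coeff_zero_eq_constantCoeff, map_pow]
    · -- j < m
      set w := m - j with hw
      have hw1 : 1 ≤ w := by omega
      have hwm : w < m := by omega
      have hwj : w + j = m := by omega
      have hw11 : w - 1 + 1 = w := Nat.sub_add_cancel hw1
      have hsum : (w : ℂ) * coeff m (g ^ j) =
          coeff (w - 1) (derivativeFun (S ^ j) * S ^ w) := by
        have hL : (w : ℂ) * coeff m (g ^ j)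
            = ∑ i ∈ Finset.range w,
                ((i:ℂ)+1) * (coeff (i+1) (S^j) * coeff (w-1-i) (S^w)) := by
          rw [hcoe j m hjm, ← hw, coeff_pcomp, Finset.mul_sum, Finset.sum_range_succ']
          have h0 : (w:ℂ) * (coeff 0 (S^j) * coeff w ((g:PowerSeries ℂ)^0)) = 0 := by
            rw [pow_zero, PowerSeries.coeff_one, if_neg (by omega)]; ring
          rw [h0, add_zero]
          refine Finset.sum_congr rfl fun i hi => ?_
          have hi' : i < w := Finset.mem_range.1 hi
          have hIH := IH w hwm (i+1) (by omega) (by omega)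
          have hidx : w - (i+1) = w - 1 - i := by omega
          push_cast at hIH
          calc (w:ℂ) * (coeff (i+1) (S^j) * coeff w (g^(i+1)))
              = coeff (i+1) (S^j) * ((w:ℂ) * coeff w (g^(i+1))) := by ring
            _ = coeff (i+1) (S^j) * (((i:ℂ)+1) * coeff (w-(i+1)) (S^w)) := by rw [hIH]
            _ = ((i:ℂ)+1) * (coeff (i+1) (S^j) * coeff (w-1-i) (S^w)) := by
                rw [hidx]; ring
        have hR : coeff (w - 1) (derivativeFun (S ^ j) * S ^ w)
            = ∑ i ∈ Finset.range w,
                ((i:ℂ)+1) * (coeff (i+1) (S^j) * coeff (w-1-i) (S^w)) := by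
          rw [PowerSeries.coeff_mul, Finset.Nat.sum_antidiagonal_eq_sum_range_succ_mk]
          rw [show (w-1).succ = w from hw11]
          refine Finset.sum_congr rfl fun i hi => ?_
          rw [coeff_derivFun]
          push_cast
          ring
        rw [hL, hR]
      have hser : (m : ℕ) • (derivativeFun (S ^ j) * S ^ w) =
          (j : ℕ) • derivativeFun (S ^ m) := by
        rw [derivativeFun_pow S j, derivativeFun_pow S m, smul_mul_assoc, smul_smul, smul_smul,
          mul_comm m j]
        have harr : S ^ (j-1) * derivativeFun S * S ^ w = S ^ (m-1) * derivativeFun S := by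
          rw [mul_right_comm, ← pow_add, show j - 1 + w = m - 1 by omega]
        rw [harr]
      have hDer : (m : ℂ) * coeff (w - 1) (derivativeFun (S ^ j) * S ^ w) =
          (j : ℂ) * ((w : ℂ) * coeff w (S ^ m)) := by
        have hc := congrArg (coeff (w - 1)) hser
        rw [map_nsmul, map_nsmul, nsmul_eq_mul, nsmul_eq_mul, coeff_derivFun, hw11] at hc
        have hcast : ((w - 1 : ℕ) : ℂ) + 1 = (w : ℂ) := by
          push_cast [Nat.cast_sub hw1]; ring
        rw [hcast] at hc
        rw [hc]; ring
      have hwne : (w : ℂ) ≠ 0 := Nat.cast_ne_zero.2 (by omega)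
      refine mul_left_cancel₀ hwne ?_
      calc (w:ℂ) * ((m:ℂ) * coeff m (g ^ j))
          = (m:ℂ) * ((w:ℂ) * coeff m (g ^ j)) := by ring
        _ = (m:ℂ) * coeff (w - 1) (derivativeFun (S ^ j) * S ^ w) := by rw [hsum]
        _ = (j : ℂ) * ((w : ℂ) * coeff w (S ^ m)) := hDer
        _ = (w:ℂ) * ((j:ℂ) * coeff w (S ^ m)) := by ring

theorem coeff_pcomp_rescale (a : ℂ) (f g : PowerSeries ℂ) (n : ℕ) :
    coeff n (pcomp f (PowerSeries.rescale a g)) = a ^ n * coeff n (pcomp f g) := by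
  rw [coeff_pcomp, coeff_pcomp, Finset.mul_sum]
  refine Finset.sum_congr rfl fun k _ => ?_
  rw [← map_pow, coeff_rescale]
  ring

theorem rootOfUnity_pow_mul (N k n : ℕ) (hN : 1 ≤ N) :
    (rootOfUnity N k) ^ (n * N) = 1 := by
  rw [rootOfUnity, ← Complex.exp_nat_mul]
  have harg : ((n * N : ℕ) : ℂ) * (2 * Real.pi * Complex.I * k / N) =
      ((n * k : ℕ) : ℤ) * (2 * Real.pi * Complex.I) := by
    have hNne : (N : ℂ) ≠ 0 := Nat.cast_ne_zero.2 (by omega)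
    field_simp
    push_cast
    ring
  rw [harg, Complex.exp_int_mul_two_pi_mul_I]

end Lag

open Lag in
/-- Generalized Lagrange inversion over the `N` branches.  Work in the variable `u = x^{1/N}`,
so that `x = u^N`.  Let `g(u)` be a fixed Puiseux solution of `g^N = x·Q(g)`, i.e.
`g(u)^N = u^N · Q(g(u))` with `g(0) = 0`, and let the branches be `g_k(x) = g(ω_N^k x^{1/N})`.
Then for every power series `φ` with `φ(0) = 0` and every `n > 0`, the coefficient of
`x^n = u^{nN}` in `Σ_{k=1}^N φ(g_k(x))` equals `(1/n)·[t^{nN-1}](φ'(t) Q(t)^n)`. -/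
theorem generalized_lagrange_inversion (N : ℕ) (hN : 1 ≤ N) (Q φ g : PowerSeries ℂ)
    (hQ : IsUnit (constantCoeff Q)) (hφ : constantCoeff φ = 0)
    (hg0 : constantCoeff g = 0)
    (hg : g ^ N = X ^ N * pcomp Q g) :
    ∀ n : ℕ, 0 < n →
      coeff (n * N)
          (∑ k ∈ Finset.range N, pcomp φ (PowerSeries.rescale (rootOfUnity N (k + 1)) g)) =
        (1 / (n : ℂ)) * coeff (n * N - 1) (PowerSeries.derivativeFun φ * Q ^ n) := by
  intro n hn
  have hQ0 : constantCoeff Q ≠ 0 := hQ.ne_zero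
  obtain ⟨S, hSN, hS0, hgS⟩ := exists_root_eq hN Q g hQ0 hg0 hg
  have hcore := core_lagrange hg0 hgS
  have hnN1 : 1 ≤ n * N := Nat.one_le_iff_ne_zero.2 (by positivity)
  have hnne : (n : ℂ) ≠ 0 := Nat.cast_ne_zero.2 (by omega)
  have hQn : Q ^ n = S ^ (n * N) := by
    rw [← hSN, ← pow_mul, mul_comm N n]
  -- LHS equals N * coeff (n*N) (pcomp φ g)
  have hLHS : coeff (n * N)
      (∑ k ∈ Finset.range N, pcomp φ (PowerSeries.rescale (rootOfUnity N (k + 1)) g)) =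
      (N : ℂ) * coeff (n * N) (pcomp φ g) := by
    rw [map_sum]
    rw [Finset.sum_congr rfl fun k _ => coeff_pcomp_rescale (rootOfUnity N (k+1)) φ g (n*N)]
    rw [Finset.sum_congr rfl fun k _ => by
      rw [rootOfUnity_pow_mul N (k+1) n hN, one_mul]]
    rw [Finset.sum_const, Finset.card_range, nsmul_eq_mul]
  rw [hLHS]
  -- key computation
  have hkey : (n : ℂ) * ((N : ℂ) * coeff (n * N) (pcomp φ g)) =
      coeff (n * N - 1) (PowerSeries.derivativeFun φ * Q ^ n) := by
    have hL : (n : ℂ) * ((N : ℂ) * coeff (n * N) (pcomp φ g)) =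
        ∑ k ∈ Finset.range (n * N + 1), coeff k φ * (((n * N : ℕ) : ℂ) * coeff (n*N) (g^k)) := by
      rw [coeff_pcomp, Finset.mul_sum, Finset.mul_sum]
      refine Finset.sum_congr rfl fun k _ => ?_
      push_cast
      ring
    rw [hL, Finset.sum_range_succ']
    have h0 : coeff 0 φ * (((n * N : ℕ) : ℂ) * coeff (n*N) ((g : PowerSeries ℂ)^0)) = 0 := by
      rw [coeff_zero_eq_constantCoeff, hφ, zero_mul]
    rw [h0, add_zero]
    rw [PowerSeries.coeff_mul, Finset.Nat.sum_antidiagonal_eq_sum_range_succ_mk]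
    rw [show (n * N - 1).succ = n * N from Nat.sub_add_cancel hnN1]
    refine Finset.sum_congr rfl fun i hi => ?_
    have hi' : i < n * N := Finset.mem_range.1 hi
    have hc := hcore (n * N) (i + 1) (by omega) (by omega)
    rw [hQn, coeff_derivFun]
    rw [hc]
    have hidx : n * N - (i + 1) = n * N - 1 - i := by omega
    rw [hidx]
    push_cast
    ring
  calc (N : ℂ) * coeff (n * N) (pcomp φ g)
      = (1 / (n:ℂ)) * ((n:ℂ) * ((N : ℂ) * coeff (n * N) (pcomp φ g))) := by
        field_simp
    _ = (1 / (n : ℂ)) * coeff (n * N - 1) (PowerSeries.derivativeFun φ * Q ^ n) := by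
        rw [hkey]
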